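/- Let f : (0,∞) → (0,∞) be nondecreasing with ∫₁^∞ 1/f(t) dt = ∞. Then ∫₁^∞ 1/(f(t) ∨ t) dt = ∞, where a ∨ b denotes the maximum of a and b. -/

import Mathlib

open MeasureTheory Filter

lemma aux_upper_bound (f : ℝ → ℝ) (hmono : MonotoneOn f (Set.Ioi 0))
    (hpos : ∀ t > (0:ℝ), 0 < f t) (a b : ℝ) (ha : 0 < a) :
    ∫⁻ t in Set.Ico a b, ENNReal.ofReal (1 / f t) ≤ ENNReal.ofReal ((b - a) * (1 / f a)) := by
  calc ∫⁻ t in Set.Ico a b, ENNReal.ofReal (1 / f t)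
      ≤ ∫⁻ _ in Set.Ico a b, ENNReal.ofReal (1 / f a) := by
        apply setLIntegral_mono measurable_const
        intro x hx
        apply ENNReal.ofReal_le_ofReal
        apply one_div_le_one_div_of_le (hpos a ha)
        exact hmono (Set.mem_Ioi.2 ha) (Set.mem_Ioi.2 (lt_of_lt_of_le ha hx.1)) hx.1
    _ = ENNReal.ofReal (1 / f a) * volume (Set.Ico a b) := setLIntegral_const _ _
    _ = ENNReal.ofReal ((b - a) * (1 / f a)) := by
        rw [Real.volume_Ico, ← ENNReal.ofReal_mul (one_div_nonneg.2 (hpos a ha).le), mul_comm]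

lemma aux_lower_bound (g : ℝ → ℝ) (hmono : MonotoneOn g (Set.Ioi 0))
    (hpos : ∀ t > (0:ℝ), 0 < g t) (a b : ℝ) (ha : 0 < a) (hab : a ≤ b) :
    ENNReal.ofReal ((b - a) * (1 / g b)) ≤ ∫⁻ t in Set.Ico a b, ENNReal.ofReal (1 / g t) := by
  have hb : 0 < b := lt_of_lt_of_le ha hab
  calc ENNReal.ofReal ((b - a) * (1 / g b))
      = ENNReal.ofReal (1 / g b) * volume (Set.Ico a b) := by
        rw [Real.volume_Ico, ← ENNReal.ofReal_mul (one_div_nonneg.2 (hpos b hb).le), mul_comm]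
    _ = ∫⁻ _ in Set.Ico a b, ENNReal.ofReal (1 / g b) := (setLIntegral_const _ _).symm
    _ ≤ _ := by
        apply lintegral_mono_ae
        rw [ae_restrict_iff' measurableSet_Ico]
        filter_upwards with x hx
        apply ENNReal.ofReal_le_ofReal
        apply one_div_le_one_div_of_le (hpos x (lt_of_lt_of_le ha hx.1))
        exact hmono (Set.mem_Ioi.2 (lt_of_lt_of_le ha hx.1)) (Set.mem_Ioi.2 hb) (le_of_lt hx.2)

lemma aux_Ici_eq_iUnion : Set.Ici (1:ℝ) = ⋃ n : ℕ, Set.Ico ((2:ℝ)^n) (2^(n+1)) := by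
  ext x
  simp only [Set.mem_Ici, Set.mem_iUnion, Set.mem_Ico]
  constructor
  · intro hx
    have hex : ∃ n : ℕ, x < 2^n := pow_unbounded_of_one_lt x one_lt_two
    classical
    have hn : x < 2 ^ Nat.find hex := Nat.find_spec hex
    have hn0 : Nat.find hex ≠ 0 := by
      intro h
      rw [h] at hn; simp at hn; linarith
    obtain ⟨m, hm⟩ := Nat.exists_eq_succ_of_ne_zero hn0
    refine ⟨m, ?_, ?_⟩
    · have := Nat.find_min hex (by rw [hm]; exact m.lt_succ_self)
      push_neg at this
      exact this
    · rw [hm] at hn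
      exact hn
  · rintro ⟨n, h1, _⟩
    exact le_trans (one_le_pow₀ (by norm_num)) h1

lemma aux_pairwise_disj :
    Pairwise (Function.onFun Disjoint fun n : ℕ => Set.Ico ((2:ℝ)^n) (2^(n+1))) := by
  have key : ∀ m n : ℕ, m < n →
      Disjoint (Set.Ico ((2:ℝ)^m) (2^(m+1))) (Set.Ico ((2:ℝ)^n) (2^(n+1))) := by
    intro m n h
    rw [Set.Ico_disjoint_Ico]
    have h2 : (2:ℝ)^(m+1) ≤ 2^n := pow_le_pow_right₀ one_le_two h
    calc (2:ℝ)^(m+1) ⊓ 2^(n+1) ≤ 2^(m+1) := inf_le_left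
      _ ≤ 2^n := h2
      _ ≤ 2^m ⊔ 2^n := le_sup_right
  intro m n hmn
  rcases hmn.lt_or_gt with h | h
  · exact key m n h
  · exact (key n m h).symm

theorem divergent_integral_max (f : ℝ → ℝ)
    (hmono : MonotoneOn f (Set.Ioi 0)) (hpos : ∀ t > (0 : ℝ), 0 < f t)
    (hint : ∫⁻ t in Set.Ici (1 : ℝ), ENNReal.ofReal (1 / f t) = ⊤) :
    ∫⁻ t in Set.Ici (1 : ℝ), ENNReal.ofReal (1 / max (f t) t) = ⊤ := by
  set g : ℝ → ℝ := fun t => max (f t) t with hg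
  have hgmono : MonotoneOn g (Set.Ioi 0) := fun a ha b hb hab =>
    max_le_max (hmono ha hb hab) hab
  have hgpos : ∀ t > (0:ℝ), 0 < g t := fun t ht => lt_of_lt_of_le ht (le_max_right _ _)
  have hmeas : ∀ n : ℕ, MeasurableSet (Set.Ico ((2:ℝ)^n) (2^(n+1))) := fun n => measurableSet_Ico
  have h2pos : ∀ n : ℕ, (0:ℝ) < 2^n := fun n => by positivity
  have hdiff : ∀ n : ℕ, (2:ℝ)^(n+1) - 2^n = 2^n := by
    intro n; rw [pow_succ]; ring
  -- Step 1 : the condensed series for f diverges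
  have hstep1 : ∑' n : ℕ, ENNReal.ofReal ((2:ℝ)^n * (1 / f (2^n))) = ⊤ := by
    refine top_le_iff.mp ?_
    calc (⊤:ENNReal) = ∑' n : ℕ, ∫⁻ t in Set.Ico ((2:ℝ)^n) (2^(n+1)), ENNReal.ofReal (1 / f t) := by
          rw [← lintegral_iUnion hmeas aux_pairwise_disj, ← aux_Ici_eq_iUnion]
          exact hint.symm
      _ ≤ _ := by
          refine ENNReal.tsum_le_tsum fun n => ?_
          have h := aux_upper_bound f hmono hpos (2^n) (2^(n+1)) (h2pos n)
          rwa [hdiff n] at h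
  -- Step 2 : the condensed series for g diverges
  have hstep2 : ∑' n : ℕ, ENNReal.ofReal ((2:ℝ)^n * (1 / g (2^(n+1)))) = ⊤ := by
    by_contra h
    have htend := ENNReal.tendsto_atTop_zero_of_tsum_ne_top h
    have hev : ∀ᶠ n in atTop,
        ENNReal.ofReal ((2:ℝ)^n * (1 / g (2^(n+1)))) < ENNReal.ofReal (1/2) :=
      htend.eventually_lt_const (by norm_num : (0:ENNReal) < ENNReal.ofReal (1/2))
    obtain ⟨N, hN⟩ := hev.exists_forall_of_atTop
    have hkey : ∀ n ≥ N, ENNReal.ofReal ((2:ℝ)^(n+1) * (1 / f (2^(n+1))))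
        ≤ 2 * ENNReal.ofReal ((2:ℝ)^n * (1 / g (2^(n+1)))) := by
      intro n hn
      have h1 := hN n hn
      have hgp : (0:ℝ) < g (2^(n+1)) := hgpos _ (h2pos (n+1))
      have hr : (2:ℝ)^n * (1 / g (2^(n+1))) < 1/2 :=
        (ENNReal.ofReal_lt_ofReal_iff (by norm_num)).mp h1
      have hgt : (2:ℝ)^(n+1) < g (2^(n+1)) := by
        rw [mul_one_div, div_lt_iff₀ hgp] at hr
        nlinarith [h2pos n, pow_succ (2:ℝ) n]
      have hlt : (2:ℝ)^(n+1) < f (2^(n+1)) := by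
        rcases max_cases (f ((2:ℝ)^(n+1))) ((2:ℝ)^(n+1)) with ⟨he, _⟩ | ⟨he, _⟩
        · have : g ((2:ℝ)^(n+1)) = f ((2:ℝ)^(n+1)) := he
          rwa [this] at hgt
        · have : g ((2:ℝ)^(n+1)) = (2:ℝ)^(n+1) := he
          rw [this] at hgt; linarith
      have hfe : g ((2:ℝ)^(n+1)) = f ((2:ℝ)^(n+1)) := max_eq_left hlt.le
      rw [hfe]
      rw [← ENNReal.ofReal_ofNat, ← ENNReal.ofReal_mul (by norm_num)]
      apply ENNReal.ofReal_le_ofReal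
      rw [pow_succ]
      ring_nf
      exact le_rfl
    -- bound the partial sums of the divergent series, contradiction
    set F : ℕ → ENNReal := fun n => ENNReal.ofReal ((2:ℝ)^n * (1 / f (2^n))) with hF
    set D : ℕ → ENNReal := fun n => ENNReal.ofReal ((2:ℝ)^n * (1 / g (2^(n+1)))) with hD
    have hkey' : ∀ n ≥ N, F (n+1) ≤ 2 * D n := fun n hn => hkey n hn
    have hB : ∀ M : ℕ, ∑ i ∈ Finset.range M, F i
        ≤ F 0 + ∑ i ∈ Finset.range N, F (i+1) + 2 * ∑' n, D n := by
      intro M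
      have hKge : N + 1 ≤ max M (N+1) := le_max_right _ _
      obtain ⟨K', hK'⟩ : ∃ K', max M (N+1) = K' + 1 := ⟨max M (N+1) - 1, by omega⟩
      have hNK : N ≤ K' := by omega
      calc ∑ i ∈ Finset.range M, F i ≤ ∑ i ∈ Finset.range (K'+1), F i := by
            rw [← hK']
            exact Finset.sum_le_sum_of_subset (Finset.range_subset_range.2 (le_max_left _ _))
        _ = ∑ i ∈ Finset.range K', F (i+1) + F 0 := Finset.sum_range_succ' F K'
        _ = F 0 + ∑ i ∈ Finset.range K', F (i+1) := add_comm _ _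
        _ = F 0 + (∑ i ∈ Finset.range N, F (i+1) + ∑ i ∈ Finset.Ico N K', F (i+1)) := by
            rw [Finset.range_eq_Ico, Finset.range_eq_Ico, Finset.sum_Ico_consecutive _ (Nat.zero_le N) hNK]
        _ ≤ F 0 + (∑ i ∈ Finset.range N, F (i+1) + 2 * ∑' n, D n) := by
            gcongr
            calc ∑ i ∈ Finset.Ico N K', F (i+1)
                ≤ ∑ i ∈ Finset.Ico N K', 2 * D i :=
                  Finset.sum_le_sum fun i hi => hkey' i (Finset.mem_Ico.1 hi).1
              _ = 2 * ∑ i ∈ Finset.Ico N K', D i := by rw [Finset.mul_sum]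
              _ ≤ 2 * ∑' n, D n := by gcongr; exact ENNReal.sum_le_tsum _
        _ = F 0 + ∑ i ∈ Finset.range N, F (i+1) + 2 * ∑' n, D n := by rw [add_assoc]
    have htop : (⊤:ENNReal) ≤ F 0 + ∑ i ∈ Finset.range N, F (i+1) + 2 * ∑' n, D n := by
      rw [← hstep1, ENNReal.tsum_eq_iSup_nat]
      exact iSup_le hB
    have hne : F 0 + ∑ i ∈ Finset.range N, F (i+1) + 2 * ∑' n, D n ≠ ⊤ := by
      refine ENNReal.add_ne_top.2 ⟨ENNReal.add_ne_top.2 ⟨ENNReal.ofReal_ne_top, ?_⟩, ?_⟩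
      · exact (ENNReal.sum_lt_top.mpr fun i _ => ENNReal.ofReal_lt_top).ne
      · exact ENNReal.mul_ne_top (by norm_num) h
    exact hne (top_le_iff.mp htop)
  -- Step 3 : conclude
  refine top_le_iff.mp ?_
  have hfinal : (⊤:ENNReal) ≤ ∫⁻ t in Set.Ici (1:ℝ), ENNReal.ofReal (1 / g t) := by
    calc (⊤:ENNReal) = ∑' n : ℕ, ENNReal.ofReal ((2:ℝ)^n * (1 / g (2^(n+1)))) := hstep2.symm
      _ ≤ ∑' n : ℕ, ∫⁻ t in Set.Ico ((2:ℝ)^n) (2^(n+1)), ENNReal.ofReal (1 / g t) := by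
          refine ENNReal.tsum_le_tsum fun n => ?_
          have h := aux_lower_bound g hgmono hgpos (2^n) (2^(n+1)) (h2pos n)
            (by rw [pow_succ]; nlinarith [h2pos n])
          rwa [hdiff n] at h
      _ = ∫⁻ t in Set.Ici (1:ℝ), ENNReal.ofReal (1 / g t) := by
          rw [← lintegral_iUnion hmeas aux_pairwise_disj, ← aux_Ici_eq_iUnion]
  exact hfinal
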